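/- Let D be an integral domain and let I be an integral t-ideal of D (i.e., I = I^t). If P is a prime ideal of D minimal over I (minimal among the prime ideals containing I), then P is a t-ideal of D. -/

import Mathlib

open scoped nonZeroDivisors

/-- The `t`-closure of a fractional ideal `E` of an integral domain `D`:
the union (here: supremum, which is a directed union) of `F^v = (F⁻¹)⁻¹` over all
nonzero finitely generated fractional subideals `F` of `E`, viewed as a
`D`-submodule of the fraction field of `D`. -/
noncomputable def tClos (D : Type*) [CommRing D] [IsDomain D]
    (E : FractionalIdeal D⁰ (FractionRing D)) : Submodule D (FractionRing D) :=
  ⨆ F ∈ {F : FractionalIdeal D⁰ (FractionRing D) |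
      F ≠ 0 ∧ F ≤ E ∧ (F : Submodule D (FractionRing D)).FG},
    (((F⁻¹)⁻¹ : FractionalIdeal D⁰ (FractionRing D)) : Submodule D (FractionRing D))

/-- An integral ideal `I` of an integral domain `D` is a `t`-ideal if `I = I^t`. -/
def Ideal.IsT {D : Type*} [CommRing D] [IsDomain D] (I : Ideal D) : Prop :=
  ((I : FractionalIdeal D⁰ (FractionRing D)) : Submodule D (FractionRing D)) = tClos D I

open FractionalIdeal

section helpers
variable {D : Type*} [CommRing D] [IsDomain D]

local notation "K" => FractionRing D
local notation "Frac" => FractionalIdeal D⁰ (FractionRing D)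

lemma my_inv_ne_zero {A : Frac} (hA : A ≠ 0) : A⁻¹ ≠ 0 := by
  intro h0
  have := FractionalIdeal.bot_lt_mul_inv hA
  rw [h0, mul_zero] at this
  exact lt_irrefl _ this

lemma my_mul_ne_zero {A B : Frac} (hA : A ≠ 0) (hB : B ≠ 0) : A * B ≠ 0 := by
  simp only [Ne, FractionalIdeal.eq_zero_iff, not_forall] at hA hB ⊢
  obtain ⟨a, ha, ha0⟩ := hA
  obtain ⟨b, hb, hb0⟩ := hB
  exact ⟨a * b, ⟨FractionalIdeal.mul_mem_mul ha hb, mul_ne_zero ha0 hb0⟩⟩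

lemma my_mul_inv_le_one {A : Frac} : A * A⁻¹ ≤ 1 := by
  rw [inv_eq]; exact mul_one_div_le_one

lemma my_le_vclos {A : Frac} (hA : A ≠ 0) : A ≤ A⁻¹⁻¹ := by
  rw [inv_eq (I := A⁻¹)]
  exact (le_div_iff_mul_le (my_inv_ne_zero hA)).mpr my_mul_inv_le_one

lemma my_v_mul_le {A B : Frac} (hA : A ≠ 0) (hB : B ≠ 0) :
    A⁻¹⁻¹ * B⁻¹⁻¹ ≤ (A * B)⁻¹⁻¹ := by
  have hAB : A * B ≠ 0 := my_mul_ne_zero hA hB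
  have step1 : B * (A * B)⁻¹ ≤ A⁻¹ := by
    rw [inv_eq (I := A)]
    refine (le_div_iff_mul_le hA).mpr ?_
    calc B * (A * B)⁻¹ * A = A * B * (A * B)⁻¹ := by ring
    _ ≤ 1 := my_mul_inv_le_one
  have step2 : A⁻¹⁻¹ * (B * (A * B)⁻¹) ≤ 1 := by
    calc A⁻¹⁻¹ * (B * (A * B)⁻¹) ≤ A⁻¹⁻¹ * A⁻¹ := mul_right_mono step1
    _ = A⁻¹ * A⁻¹⁻¹ := mul_comm _ _
    _ ≤ 1 := my_mul_inv_le_one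
  have step3 : A⁻¹⁻¹ * (A * B)⁻¹ ≤ B⁻¹ := by
    rw [inv_eq (I := B)]
    refine (le_div_iff_mul_le hB).mpr ?_
    calc A⁻¹⁻¹ * (A * B)⁻¹ * B = A⁻¹⁻¹ * (B * (A * B)⁻¹) := by ring
    _ ≤ 1 := step2
  have step4 : A⁻¹⁻¹ * B⁻¹⁻¹ * (A * B)⁻¹ ≤ 1 := by
    calc A⁻¹⁻¹ * B⁻¹⁻¹ * (A * B)⁻¹ = B⁻¹⁻¹ * (A⁻¹⁻¹ * (A * B)⁻¹) := by ring
    _ ≤ B⁻¹⁻¹ * B⁻¹ := mul_right_mono step3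
    _ = B⁻¹ * B⁻¹⁻¹ := mul_comm _ _
    _ ≤ 1 := my_mul_inv_le_one
  rw [inv_eq (I := (A*B)⁻¹)]
  exact (le_div_iff_mul_le (my_inv_ne_zero hAB)).mpr step4

lemma my_pow_ne_zero {A : Frac} (hA : A ≠ 0) : ∀ n : ℕ, A ^ n ≠ 0
  | 0 => by simp
  | (n+1) => by rw [pow_succ]; exact my_mul_ne_zero (my_pow_ne_zero hA n) hA

lemma my_v_pow_le {A : Frac} (hA : A ≠ 0) : ∀ n : ℕ, 0 < n → (A⁻¹⁻¹) ^ n ≤ (A ^ n)⁻¹⁻¹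
  | 1, _ => by simp
  | (n+2), _ => by
    have ih := my_v_pow_le hA (n+1) (Nat.succ_pos _)
    calc (A⁻¹⁻¹) ^ (n+2) = (A⁻¹⁻¹) ^ (n+1) * A⁻¹⁻¹ := by ring
    _ ≤ (A ^ (n+1))⁻¹⁻¹ * A⁻¹⁻¹ := mul_left_mono ih
    _ ≤ (A ^ (n+1) * A)⁻¹⁻¹ := my_v_mul_le (my_pow_ne_zero hA _) hA
    _ = (A ^ (n+2))⁻¹⁻¹ := by rw [← pow_succ]

lemma my_span_mul_inv {c : K} (hc : c ≠ 0) {A : Frac} (hA : A ≠ 0) :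
    (spanSingleton D⁰ c * A)⁻¹ = spanSingleton D⁰ c⁻¹ * A⁻¹ := by
  have hc' : spanSingleton D⁰ c ≠ 0 := by rwa [Ne, spanSingleton_eq_zero_iff]
  have hU : spanSingleton D⁰ c * spanSingleton D⁰ c⁻¹ = 1 := by
    rw [spanSingleton_mul_spanSingleton, mul_inv_cancel₀ hc, spanSingleton_one]
  have hcA : spanSingleton D⁰ c * A ≠ 0 := my_mul_ne_zero hc' hA
  apply le_antisymm
  · have h1 : (spanSingleton D⁰ c * A)⁻¹ * (spanSingleton D⁰ c) ≤ A⁻¹ := by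
      rw [inv_eq (I := A)]
      refine (le_div_iff_mul_le hA).mpr ?_
      calc (spanSingleton D⁰ c * A)⁻¹ * spanSingleton D⁰ c * A
          = (spanSingleton D⁰ c * A) * (spanSingleton D⁰ c * A)⁻¹ := by ring
      _ ≤ 1 := my_mul_inv_le_one
    calc (spanSingleton D⁰ c * A)⁻¹
        = (spanSingleton D⁰ c * A)⁻¹ * (spanSingleton D⁰ c * spanSingleton D⁰ c⁻¹) := by
          rw [hU, mul_one]
      _ = (spanSingleton D⁰ c * A)⁻¹ * spanSingleton D⁰ c * spanSingleton D⁰ c⁻¹ := by ring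
      _ ≤ A⁻¹ * spanSingleton D⁰ c⁻¹ := mul_left_mono h1
      _ = spanSingleton D⁰ c⁻¹ * A⁻¹ := mul_comm _ _
  · rw [inv_eq (I := spanSingleton D⁰ c * A)]
    refine (le_div_iff_mul_le hcA).mpr ?_
    calc spanSingleton D⁰ c⁻¹ * A⁻¹ * (spanSingleton D⁰ c * A)
        = (spanSingleton D⁰ c * spanSingleton D⁰ c⁻¹) * (A * A⁻¹) := by ring
      _ = A * A⁻¹ := by rw [hU, one_mul]
      _ ≤ 1 := my_mul_inv_le_one

lemma my_span_mul_v {c : K} (hc : c ≠ 0) {A : Frac} (hA : A ≠ 0) :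
    (spanSingleton D⁰ c * A)⁻¹⁻¹ = spanSingleton D⁰ c * A⁻¹⁻¹ := by
  rw [my_span_mul_inv hc hA, my_span_mul_inv (inv_ne_zero hc) (my_inv_ne_zero hA), inv_inv c]

end helpers

lemma my_exists_c {D : Type*} [CommRing D] [IsDomain D] {I P : Ideal D}
    (hP : P ∈ I.minimalPrimes) {J : Ideal D} (hJfg : J.FG) (hJP : J ≤ P) :
    ∃ n : ℕ, 0 < n ∧ ∃ c : D, c ∉ P ∧ Ideal.span {c} * J ^ n ≤ I := by
  classical
  haveI hPp : P.IsPrime := hP.1.1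
  set R := Localization.AtPrime P
  set f := algebraMap D R with hf
  have hinj : Function.Injective f := IsLocalization.injective R P.primeCompl_le_nonZeroDivisors
  have hmaxrad : IsLocalRing.maximalIdeal R ≤ (Ideal.map f I).radical := by
    rw [Ideal.radical_eq_sInf]
    refine le_sInf ?_
    rintro Q ⟨hIQ, hQp⟩
    have hQmax : Q ≤ IsLocalRing.maximalIdeal R := IsLocalRing.le_maximalIdeal hQp.ne_top
    have hcomapP : Ideal.comap f Q ≤ P := by
      have h := Ideal.comap_mono (f := f) hQmax
      exact h.trans (le_of_eq Localization.AtPrime.comap_maximalIdeal)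
    have h1 : P ≤ Ideal.comap f Q :=
      hP.2 ⟨hQp.comap f, Ideal.map_le_iff_le_comap.mp hIQ⟩ hcomapP
    have heq : Ideal.comap f Q = P := le_antisymm hcomapP h1
    refine le_of_eq ?_
    calc IsLocalRing.maximalIdeal R = Ideal.map f P :=
          Localization.AtPrime.map_eq_maximalIdeal.symm
    _ = Ideal.map f (Ideal.comap f Q) := by rw [heq]
    _ = Q := IsLocalization.map_comap P.primeCompl R Q
  have hJrad : Ideal.map f J ≤ (Ideal.map f I).radical := by
    refine le_trans ?_ hmaxrad
    calc Ideal.map f J ≤ Ideal.map f P := Ideal.map_mono hJP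
    _ = IsLocalRing.maximalIdeal R := Localization.AtPrime.map_eq_maximalIdeal
  obtain ⟨k, hk⟩ := Ideal.exists_pow_le_of_le_radical_of_fg hJrad (hJfg.map f)
  refine ⟨k + 1, Nat.succ_pos _, ?_⟩
  have hn : Ideal.map f (J ^ (k + 1)) ≤ Ideal.map f I := by
    rw [Ideal.map_pow]
    exact le_trans (Ideal.pow_le_pow_right (Nat.le_succ k)) hk
  obtain ⟨T, hT⟩ := Submodule.FG.pow hJfg (k + 1)
  have hsel : ∀ g : D, ∃ s : D, g ∈ T → s ∉ P ∧ s * g ∈ I := by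
    intro g
    by_cases hg : g ∈ T
    · have hgJ : g ∈ J ^ (k + 1) := by
        rw [← hT]; exact Ideal.subset_span hg
      have : f g ∈ Ideal.map f I := hn (Ideal.mem_map_of_mem f hgJ)
      rw [IsLocalization.mem_map_algebraMap_iff P.primeCompl R] at this
      obtain ⟨⟨a, s⟩, has⟩ := this
      refine ⟨s, fun _ => ⟨s.2, ?_⟩⟩
      have : f ((s : D) * g) = f (a : D) := by
        rw [_root_.map_mul, mul_comm]; exact has
      have := hinj this
      rw [this]; exact a.2
    · exact ⟨1, fun h => absurd h hg⟩
  choose s hs using hsel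
  set c := ∏ g ∈ T, s g with hc
  have hcP : c ∉ P := by
    have : c ∈ P.primeCompl := Submonoid.prod_mem _ (fun g hg => (hs g hg).1)
    exact this
  refine ⟨c, hcP, ?_⟩
  have hcg : ∀ x ∈ J ^ (k + 1), c * x ∈ I := by
    intro x hx
    rw [← hT] at hx
    induction hx using Submodule.span_induction with
    | mem g hg =>
      have h1 : s g * g ∈ I := (hs g hg).2
      have h2 : c = s g * ∏ h ∈ T.erase g, s h := (Finset.mul_prod_erase T s hg).symm
      rw [h2]
      have h3 : s g * (∏ h ∈ T.erase g, s h) * g = (∏ h ∈ T.erase g, s h) * (s g * g) := by ring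
      rw [h3]
      exact I.mul_mem_left _ h1
    | zero => simpa using I.zero_mem
    | add y z _ _ hy hz => rw [mul_add]; exact I.add_mem hy hz
    | smul d y _ hy =>
      rw [smul_eq_mul]
      have h3 : c * (d * y) = d * (c * y) := by ring
      rw [h3]
      exact I.mul_mem_left d hy
  rw [Ideal.mul_le]
  intro r hr x hx
  rw [Ideal.mem_span_singleton'] at hr
  obtain ⟨b, rfl⟩ := hr
  have h3 : b * c * x = b * (c * x) := by ring
  rw [h3]
  exact I.mul_mem_left b (hcg x hx)

/-- If `P` is a prime ideal of an integral domain `D` minimal over an integral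
`t`-ideal `I` of `D`, then `P` is a `t`-ideal of `D`. -/
theorem t_ideal_of_minimal_prime_over_t_ideal {D : Type*} [CommRing D] [IsDomain D]
    (I : Ideal D) (hI0 : I ≠ ⊥) (hIt : I.IsT)
    (P : Ideal D) (hP : P ∈ I.minimalPrimes) : P.IsT := by
  classical
  have hPp : P.IsPrime := hP.1.1
  have hIP : I ≤ P := hP.1.2
  unfold Ideal.IsT
  apply le_antisymm
  · intro x hx
    rw [FractionalIdeal.mem_coe] at hx
    by_cases hx0 : x = 0
    · rw [hx0]; exact (tClos D ↑P).zero_mem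
    · set F := spanSingleton D⁰ x with hFdef
      have hF0 : F ≠ 0 := by rwa [hFdef, Ne, spanSingleton_eq_zero_iff]
      have hFP : F ≤ ↑P := spanSingleton_le_iff_mem.mpr hx
      have hFfg : (F : Submodule D (FractionRing D)).FG := by
        rw [hFdef, coe_spanSingleton]; exact Submodule.fg_span_singleton x
      have hle : ((F⁻¹⁻¹ : FractionalIdeal D⁰ (FractionRing D)) :
          Submodule D (FractionRing D)) ≤ tClos D ↑P :=
        le_iSup₂_of_le F ⟨hF0, hFP, hFfg⟩ le_rfl
      exact hle (FractionalIdeal.mem_coe.mpr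
        (my_le_vclos hF0 (mem_spanSingleton_self _ x)))
  · refine iSup_le fun F => iSup_le fun hF => ?_
    obtain ⟨hF0, hFP, hFfg⟩ := hF
    obtain ⟨J, rfl⟩ := le_one_iff_exists_coeIdeal.mp (le_trans hFP coeIdeal_le_one)
    have hJP : J ≤ P := (coeIdeal_le_coeIdeal _).mp hFP
    have hJfg : J.FG := by
      apply Submodule.fg_of_fg_map_injective (Algebra.linearMap D (FractionRing D))
        (IsFractionRing.injective D (FractionRing D))
      exact hFfg
    obtain ⟨n, hn0, c, hcP, hcI⟩ := my_exists_c hP hJfg hJP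
    set A := (↑J : FractionalIdeal D⁰ (FractionRing D)) with hAdef
    have hc0 : c ≠ 0 := fun h => hcP (h ▸ P.zero_mem)
    have hfc0 : algebraMap D (FractionRing D) c ≠ 0 := by
      simpa using hc0
    intro x hx
    rw [FractionalIdeal.mem_coe] at hx
    have hA1 : A⁻¹⁻¹ ≤ 1 := by
      have h1A : (1 : FractionalIdeal D⁰ (FractionRing D)) ≤ A⁻¹ := by
        rw [inv_eq]
        exact (le_div_iff_mul_le hF0).mpr (by rw [one_mul]; exact coeIdeal_le_one)
      have h := inv_anti_mono (one_ne_zero' (FractionalIdeal D⁰ (FractionRing D))) (my_inv_ne_zero hF0) h1A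
      rwa [inv_one] at h
    obtain ⟨d, hd⟩ := (FractionalIdeal.mem_one_iff D⁰).mp (hA1 hx)
    have hxn : x ^ n ∈ (A ^ n)⁻¹⁻¹ := by
      have h1 : x ^ n ∈ A⁻¹⁻¹ ^ n := by
        rw [← FractionalIdeal.mem_coe, coe_pow]
        exact Submodule.pow_mem_pow _ (FractionalIdeal.mem_coe.mpr hx) n
      exact my_v_pow_le hF0 n hn0 h1
    set G := spanSingleton D⁰ (algebraMap D (FractionRing D) c) * A ^ n with hGdef
    have hGeq : G = ↑(Ideal.span {c} * J ^ n) := by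
      rw [hGdef, hAdef, coeIdeal_mul, coeIdeal_span_singleton, coeIdeal_pow]
    have hG0 : G ≠ 0 :=
      my_mul_ne_zero (by rwa [Ne, spanSingleton_eq_zero_iff]) (my_pow_ne_zero hF0 n)
    have hGI : G ≤ ↑I := by
      rw [hGeq]; exact (coeIdeal_le_coeIdeal _).mpr hcI
    have hGfg : (G : Submodule D (FractionRing D)).FG := by
      rw [hGeq, FractionalIdeal.coe_coeIdeal]
      refine Submodule.FG.map _ (Submodule.FG.mul ?_ (Submodule.FG.pow hJfg n))
      exact Submodule.fg_span_singleton c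
    have hvle : ((G⁻¹⁻¹ : FractionalIdeal D⁰ (FractionRing D)) :
        Submodule D (FractionRing D)) ≤ tClos D ↑I :=
      le_iSup₂_of_le G ⟨hG0, hGI, hGfg⟩ le_rfl
    have hGsub : G⁻¹⁻¹ ≤ (↑I : FractionalIdeal D⁰ (FractionRing D)) := by
      intro y hy
      have := (hvle.trans (le_of_eq hIt.symm)) (FractionalIdeal.mem_coe.mpr hy)
      exact FractionalIdeal.mem_coe.mp this
    have hmemv : algebraMap D (FractionRing D) c * x ^ n ∈ G⁻¹⁻¹ := by
      have h := FractionalIdeal.mul_mem_mul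
        (mem_spanSingleton_self D⁰ (algebraMap D (FractionRing D) c)) hxn
      rwa [← my_span_mul_v hfc0 (my_pow_ne_zero hF0 n)] at h
    obtain ⟨a, haI, ha⟩ := (FractionalIdeal.mem_coeIdeal D⁰).mp (hGsub hmemv)
    have hda : c * d ^ n = a := by
      apply IsFractionRing.injective D (FractionRing D)
      rw [_root_.map_mul, map_pow, hd]
      exact ha.symm
    have hdP : d ∈ P := by
      have h1 : c * d ^ n ∈ P := hda ▸ hIP haI
      have h2 : d ^ n ∈ P := (hPp.mem_or_mem h1).resolve_left hcP
      exact hPp.mem_of_pow_mem n h2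
    rw [FractionalIdeal.mem_coe]
    exact (FractionalIdeal.mem_coeIdeal D⁰).mpr ⟨d, hdP, hd⟩
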